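/- The team-semantics class of EF p is not definable in classical multiset semantics: there is no CTL formula φ such that for every finite Kripke structure 𝒦 and every team T of 𝒦, (𝒦, w ⊨ φ under classical CTL semantics for all w ∈ T) holds if and only if 𝒦, T ⊨ EF p under team semantics, where EF p := E[(p∨¬p) U p]. -/

import Mathlib

namespace TeamCTL

/-- A Kripke structure: a finite set of worlds, a left-total transition relation,
and a labeling function. -/
structure Kripke (AP : Type) where
  W : Type
  [instFin : Fintype W]
  R : W → W → Prop
  leftTotal : ∀ w : W, ∃ w' : W, R w w'
  η : W → Set AP

attribute [instance] Kripke.instFin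

/-- CTL formulae in negation normal form. -/
inductive CTL (AP : Type) : Type
  | atom : AP → CTL AP
  | natom : AP → CTL AP
  | conj : CTL AP → CTL AP → CTL AP
  | disj : CTL AP → CTL AP → CTL AP
  | ex : CTL AP → CTL AP
  | ax : CTL AP → CTL AP
  | eu : CTL AP → CTL AP → CTL AP
  | au : CTL AP → CTL AP → CTL AP
  | er : CTL AP → CTL AP → CTL AP
  | ar : CTL AP → CTL AP → CTL AP

variable {AP : Type}

/-- `π` is a path of `K` starting at the world `w`. -/
def IsPathFrom (K : Kripke AP) (w : K.W) (π : ℕ → K.W) : Prop :=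
  π 0 = w ∧ ∀ i : ℕ, K.R (π i) (π (i + 1))

/-- A team of `K` is a finite multiset of worlds, represented as a list
(the positions of the list play the role of the indices of the indexed multiset;
multiset equality is list permutation).  A `T`-compatible function assigns to
each (indexed) element of the team a path starting at that world. -/
def Compatible (K : Kripke AP) (T : List K.W) (f : Fin T.length → ℕ → K.W) : Prop :=
  ∀ i : Fin T.length, IsPathFrom K (T.get i) (f i)

/-- `T[f,n]`: the team obtained by synchronously proceeding to the `n`-th element
of each chosen path. -/
def step (K : Kripke AP) {T : List K.W} (f : Fin T.length → ℕ → K.W) (n : ℕ) : List K.W :=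
  List.ofFn fun i => f i n

/-- Team semantics for CTL: `TSat K φ T` means `K, T ⊨ φ`. -/
def TSat (K : Kripke AP) : CTL AP → List K.W → Prop
  | .atom p, T => ∀ w ∈ T, p ∈ K.η w
  | .natom p, T => ∀ w ∈ T, p ∉ K.η w
  | .conj φ ψ, T => TSat K φ T ∧ TSat K ψ T
  | .disj φ ψ, T => ∃ T₁ T₂ : List K.W, (T₁ ++ T₂).Perm T ∧ TSat K φ T₁ ∧ TSat K ψ T₂
  | .ex φ, T => ∃ f, Compatible K T f ∧ TSat K φ (step K f 1)
  | .ax φ, T => ∀ f, Compatible K T f → TSat K φ (step K f 1)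
  | .eu φ ψ, T => ∃ f, Compatible K T f ∧ ∃ k : ℕ,
      TSat K ψ (step K f k) ∧ ∀ j : ℕ, 1 ≤ j → j < k → TSat K φ (step K f j)
  | .au φ ψ, T => ∀ f, Compatible K T f → ∃ k : ℕ,
      TSat K ψ (step K f k) ∧ ∀ j : ℕ, 1 ≤ j → j < k → TSat K φ (step K f j)
  | .er φ ψ, T => ∃ f, Compatible K T f ∧ ∀ k : ℕ,
      TSat K ψ (step K f k) ∨ ∃ j : ℕ, 1 ≤ j ∧ j < k ∧ TSat K φ (step K f j)
  | .ar φ ψ, T => ∀ f, Compatible K T f → ∀ k : ℕ,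
      TSat K ψ (step K f k) ∨ ∃ j : ℕ, 1 ≤ j ∧ j < k ∧ TSat K φ (step K f j)

/-- Classical (pointed) semantics for CTL: `CSat K φ w` means `K, w ⊨ φ`. -/
def CSat (K : Kripke AP) : CTL AP → K.W → Prop
  | .atom p, w => p ∈ K.η w
  | .natom p, w => p ∉ K.η w
  | .conj φ ψ, w => CSat K φ w ∧ CSat K ψ w
  | .disj φ ψ, w => CSat K φ w ∨ CSat K ψ w
  | .ex φ, w => ∃ π, IsPathFrom K w π ∧ CSat K φ (π 1)
  | .ax φ, w => ∀ π, IsPathFrom K w π → CSat K φ (π 1)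
  | .eu φ ψ, w => ∃ π, IsPathFrom K w π ∧ ∃ k : ℕ, CSat K ψ (π k) ∧ ∀ j < k, CSat K φ (π j)
  | .au φ ψ, w => ∀ π, IsPathFrom K w π → ∃ k : ℕ, CSat K ψ (π k) ∧ ∀ j < k, CSat K φ (π j)
  | .er φ ψ, w => ∃ π, IsPathFrom K w π ∧ ∀ k : ℕ, CSat K ψ (π k) ∨ ∃ j < k, CSat K φ (π j)
  | .ar φ ψ, w => ∀ π, IsPathFrom K w π → ∀ k : ℕ, CSat K ψ (π k) ∨ ∃ j < k, CSat K φ (π j)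

/-- `EF φ := E[(p ∨ ¬p) U φ]`. -/
def EF (p : AP) (φ : CTL AP) : CTL AP := .eu (.disj (.atom p) (.natom p)) φ

/-- Deterministic successor function for the counterexample structure. -/
def nxt : Fin 5 → Fin 5
  | 0 => 2 | 1 => 3 | 2 => 4 | 3 => 2 | 4 => 4

/-- Counterexample structure: `p` holds exactly at world 2; from 0 one reaches 2
at time 1 only, from 1 at time 2 only. -/
def Kex (p : ℕ) : Kripke ℕ where
  W := Fin 5
  R := fun w w' => w' = nxt w
  leftTotal := fun w => ⟨nxt w, rfl⟩
  η := fun w => if w = 2 then {p} else ∅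

lemma mem_eta (p : ℕ) (w : Fin 5) : p ∈ (Kex p).η w ↔ w = 2 := by
  by_cases h : w = 2 <;> simp [Kex, h]

lemma path_det (p : ℕ) {w : Fin 5} {π : ℕ → Fin 5}
    (h : IsPathFrom (Kex p) w π) : ∀ n, π n = nxt^[n] w := by
  intro n
  induction n with
  | zero => exact h.1
  | succ n ih =>
    have := h.2 n
    rw [this, ih, Function.iterate_succ_apply']

lemma iter_pair (k : ℕ) :
    (nxt^[k] 0 = 0 ∧ nxt^[k] 1 = 1) ∨ (nxt^[k] 0 = 2 ∧ nxt^[k] 1 = 3) ∨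
    (nxt^[k] 0 = 4 ∧ nxt^[k] 1 = 2) ∨ (nxt^[k] 0 = 4 ∧ nxt^[k] 1 = 4) := by
  induction k with
  | zero => exact Or.inl ⟨rfl, rfl⟩
  | succ k ih =>
    rw [Function.iterate_succ_apply', Function.iterate_succ_apply']
    rcases ih with ⟨h0, h1⟩ | ⟨h0, h1⟩ | ⟨h0, h1⟩ | ⟨h0, h1⟩ <;>
      rw [h0, h1] <;> simp [nxt]

lemma not_both (k : ℕ) : ¬ (nxt^[k] 0 = 2 ∧ nxt^[k] 1 = 2) := by
  rintro ⟨h0, h1⟩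
  rcases iter_pair k with ⟨a, b⟩ | ⟨a, b⟩ | ⟨a, b⟩ | ⟨a, b⟩ <;>
    first
      | exact absurd (h1.symm.trans b) (by decide)
      | exact absurd (h0.symm.trans a) (by decide)

/-- The deterministic path from `w` in `Kex p`. -/
lemma compat_iter (p : ℕ) (T : List (Fin 5)) :
    Compatible (Kex p) T (fun i n => nxt^[n] (T.get i)) := by
  intro i
  exact ⟨rfl, fun n => Function.iterate_succ_apply' nxt n _⟩

/-- The team-semantics class of `EF p` is not definable in
classical multiset semantics: no CTL formula `φ` satisfies, for every finite
Kripke structure `𝒦` and every team `T`,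
`(∀ w ∈ T, 𝒦,w ⊨ φ) ↔ 𝒦,T ⊨ EF p`. -/
theorem ef_not_classically_definable (p : ℕ) :
    ¬ ∃ φ : CTL ℕ, ∀ (K : Kripke ℕ) (T : List K.W),
        (∀ w ∈ T, CSat K φ w) ↔ TSat K (EF p (.atom p)) T := by
  rintro ⟨φ, hφ⟩
  -- singleton [0] satisfies EF p in team semantics
  have h0 : TSat (Kex p) (EF p (.atom p)) [(0 : Fin 5)] := by
    refine ⟨fun i n => nxt^[n] ((0 : Fin 5)), ?_, 1, ?_, ?_⟩
    · intro i
      fin_cases i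
      exact ⟨rfl, fun n => Function.iterate_succ_apply' nxt n 0⟩
    · intro w hw
      simp only [step, List.mem_ofFn] at hw
      obtain ⟨i, rfl⟩ := List.mem_ofFn.mp hw
      rw [mem_eta]; rfl
    · intro j hj hj'; omega
  -- singleton [1] satisfies EF p in team semantics
  have h1 : TSat (Kex p) (EF p (.atom p)) [(1 : Fin 5)] := by
    refine ⟨fun i n => nxt^[n] ((1 : Fin 5)), ?_, 2, ?_, ?_⟩
    · intro i
      fin_cases i
      exact ⟨rfl, fun n => Function.iterate_succ_apply' nxt n 1⟩
    · intro w hw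
      simp only [step, List.mem_ofFn] at hw
      obtain ⟨i, rfl⟩ := List.mem_ofFn.mp hw
      rw [mem_eta]; rfl
    · intro j hj hj'
      have hj1 : j = 1 := by omega
      subst hj1
      refine ⟨[], [(3 : Fin 5)], ?_, ?_, ?_⟩
      · simp [step]; rfl
      · intro w hw; simp at hw
      · intro w hw
        replace hw := List.mem_singleton.mp hw
        subst hw
        rw [mem_eta]; decide
  -- classical satisfaction at 0 and 1
  have c0 : CSat (Kex p) φ (0 : Fin 5) :=
    ((hφ (Kex p) [(0 : Fin 5)]).mpr h0) (0 : Fin 5) (List.mem_singleton_self _)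
  have c1 : CSat (Kex p) φ (1 : Fin 5) :=
    ((hφ (Kex p) [(1 : Fin 5)]).mpr h1) (1 : Fin 5) (List.mem_singleton_self _)
  -- hence team [0,1] would satisfy EF p
  have h01 : TSat (Kex p) (EF p (.atom p)) [(0 : Fin 5), (1 : Fin 5)] := by
    refine (hφ (Kex p) [(0 : Fin 5), (1 : Fin 5)]).mp ?_
    intro w hw
    replace hw := (List.mem_cons.mp hw).imp_right List.mem_singleton.mp
    rcases hw with rfl | rfl
    · exact c0
    · exact c1
  -- but it cannot
  obtain ⟨f, hf, k, hk, -⟩ := h01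
  have e0 : f ⟨0, Nat.zero_lt_two⟩ k = nxt^[k] 0 := path_det p (hf ⟨0, Nat.zero_lt_two⟩) k
  have e1 : f ⟨1, Nat.one_lt_two⟩ k = nxt^[k] 1 := path_det p (hf ⟨1, Nat.one_lt_two⟩) k
  have m0 : p ∈ (Kex p).η (f ⟨0, Nat.zero_lt_two⟩ k) := by
    apply hk
    simp only [step, List.mem_ofFn]
    exact ⟨⟨0, Nat.zero_lt_two⟩, rfl⟩
  have m1 : p ∈ (Kex p).η (f ⟨1, Nat.one_lt_two⟩ k) := by
    apply hk
    simp only [step, List.mem_ofFn]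
    exact ⟨⟨1, Nat.one_lt_two⟩, rfl⟩
  rw [e0, mem_eta] at m0
  rw [e1, mem_eta] at m1
  exact not_both k ⟨m0, m1⟩

end TeamCTL
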